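/- Let C be a locally finite EI category of type A∞ over a field k of characteristic 0, satisfying the transitivity and bijectivity conditions, and fix an object i. Then every kC-submodule of the module M(i) = ⊕_j k C(i,j) (with left action by composition) is finitely generated. -/

import Mathlib

/-- A skeletal locally finite EI category with objects the non-negative
integers and `Hom i j` nonempty iff `i ≤ j`. -/
structure EICat where
  Hom : ℕ → ℕ → Type
  idm : ∀ i, Hom i i
  comp : ∀ {i j l : ℕ}, Hom j l → Hom i j → Hom i l
  id_comp : ∀ {i j : ℕ} (f : Hom i j), comp (idm j) f = f
  comp_id : ∀ {i j : ℕ} (f : Hom i j), comp f (idm i) = f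
  assoc : ∀ {i j l m : ℕ} (f : Hom l m) (g : Hom j l) (h : Hom i j),
    comp (comp f g) h = comp f (comp g h)
  homFinite : ∀ i j, Finite (Hom i j)
  ei : ∀ (i : ℕ) (f : Hom i i), ∃ g : Hom i i, comp f g = idm i ∧ comp g f = idm i
  nonempty_iff : ∀ i j, Nonempty (Hom i j) ↔ i ≤ j

/-- A morphism is an isomorphism. -/
def EICat.IsIso (C : EICat) {i j : ℕ} (f : C.Hom i j) : Prop :=
  ∃ g : C.Hom j i, C.comp f g = C.idm j ∧ C.comp g f = C.idm i

/-- A morphism is unfactorizable. -/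
def EICat.Unfact (C : EICat) {i j : ℕ} (f : C.Hom i j) : Prop :=
  ¬ C.IsIso f ∧ ∀ (l : ℕ) (b₂ : C.Hom i l) (b₁ : C.Hom l j),
    f = C.comp b₁ b₂ → C.IsIso b₁ ∨ C.IsIso b₂

/-- `C` is of type `A∞`: the underlying quiver of unfactorizable morphisms is
`0 → 1 → 2 → ⋯`. -/
def EICat.TypeAInf (C : EICat) : Prop :=
  ∀ i j : ℕ, (∃ f : C.Hom i j, C.Unfact f) ↔ j = i + 1

/-- The transitivity condition: `G_{i+1}` acts transitively on `C(i, i+1)`. -/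
def EICat.TransCond (C : EICat) : Prop :=
  ∀ (i : ℕ) (f g : C.Hom i (i + 1)), ∃ e : C.Hom (i + 1) (i + 1), C.comp e f = g

/-- The chosen morphism `α_{i,j} = α_{j-1} ⋯ α_{i+1} α_i ∈ C(i,j)`, built from a
choice of morphisms `α_j ∈ C(j, j+1)`. -/
def EICat.alph (C : EICat) (α : ∀ j, C.Hom j (j + 1)) (i : ℕ) :
    ∀ {j : ℕ}, i ≤ j → C.Hom i j :=
  fun {j} h => Nat.leRecOn h (fun {n} p => C.comp (α n) p) (C.idm i)

/-- `γ, γ' ∈ C(i,j)` lie in the same `H_{i,j}`-orbit, where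
`H_{i,j} = Stab_{G_j}(α_{i,j})`. -/
def EICat.orbRel (C : EICat) (α : ∀ j, C.Hom j (j + 1)) {i j : ℕ} (hij : i ≤ j)
    (γ γ' : C.Hom i j) : Prop :=
  ∃ h : C.Hom j j, C.comp h (C.alph α i hij) = C.alph α i hij ∧ C.comp h γ = γ'

/-- `δ, δ' ∈ C(i,j+1)` lie in the same `H_{i,j+1}`-orbit, where
`α_{i,j+1} = α_j α_{i,j}`. -/
def EICat.orbRelS (C : EICat) (α : ∀ j, C.Hom j (j + 1)) {i j : ℕ} (hij : i ≤ j)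
    (δ δ' : C.Hom i (j + 1)) : Prop :=
  ∃ h : C.Hom (j + 1) (j + 1),
    C.comp h (C.comp (α j) (C.alph α i hij)) = C.comp (α j) (C.alph α i hij) ∧
    C.comp h δ = δ'

/-- The bijectivity condition: for each `i`, the induced maps
`μ_{i,j} : H_{i,j}\C(i,j) → H_{i,j+1}\C(i,j+1)` are bijective for all
sufficiently large `j`. -/
def EICat.BijCond (C : EICat) (α : ∀ j, C.Hom j (j + 1)) : Prop :=
  ∀ i : ℕ, ∃ N : ℕ, ∀ (j : ℕ) (hij : i ≤ j), N ≤ j →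
    (∀ γ γ' : C.Hom i j,
      C.orbRelS α hij (C.comp (α j) γ) (C.comp (α j) γ') → C.orbRel α hij γ γ') ∧
    (∀ δ : C.Hom i (j + 1), ∃ γ : C.Hom i j, C.orbRelS α hij (C.comp (α j) γ) δ)

/-- A `kC`-module: a (covariant) functor from `C` to `k`-modules. -/
structure CMod (k : Type) [CommRing k] (C : EICat) where
  V : ℕ → Type
  [acg : ∀ i, AddCommGroup (V i)]
  [mod : ∀ i, Module k (V i)]
  act : ∀ {i j : ℕ}, C.Hom i j → V i →ₗ[k] V j
  act_id : ∀ i : ℕ, act (C.idm i) = LinearMap.id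
  act_comp : ∀ {i j l : ℕ} (f : C.Hom j l) (g : C.Hom i j),
    act (C.comp f g) = (act f).comp (act g)

attribute [instance] CMod.acg CMod.mod

variable {k : Type} [CommRing k] {C : EICat}

/-- A family of `k`-submodules `W i ⊆ V i` is a `kC`-submodule if it is closed
under the action of all morphisms of `C`. -/
def CMod.Closed (M : CMod k C) (W : ∀ i, Submodule k (M.V i)) : Prop :=
  ∀ (i j : ℕ) (f : C.Hom i j) (x : M.V i), x ∈ W i → M.act f x ∈ W j

/-- The `kC`-module `M` is finitely generated: there is a finite family of
homogeneous elements contained in no proper `kC`-submodule. -/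
def CMod.FG (M : CMod k C) : Prop :=
  ∃ (n : ℕ) (d : Fin n → ℕ) (v : ∀ m : Fin n, M.V (d m)),
    ∀ W : ∀ i, Submodule k (M.V i), M.Closed W →
      (∀ m : Fin n, v m ∈ W (d m)) → ∀ i, W i = ⊤

/-- A `kC`-submodule `W` of `M` is finitely generated: it contains a finite
family of homogeneous elements not all contained in any smaller
`kC`-submodule. -/
def CMod.SubFG (M : CMod k C) (W : ∀ i, Submodule k (M.V i)) : Prop :=
  ∃ (n : ℕ) (d : Fin n → ℕ) (v : ∀ m : Fin n, M.V (d m)),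
    (∀ m : Fin n, v m ∈ W (d m)) ∧
    ∀ W' : ∀ i, Submodule k (M.V i), M.Closed W' →
      (∀ m : Fin n, v m ∈ W' (d m)) → ∀ i, W i ≤ W' i

/-- The `kC`-module `M` is Noetherian: every `kC`-submodule is finitely
generated. -/
def CMod.Noetherian (M : CMod k C) : Prop :=
  ∀ W : ∀ i, Submodule k (M.V i), M.Closed W → M.SubFG W

/-- The free `kC`-module `M(i) = ⊕_j k C(i,j)`, with morphisms acting by
composition. -/
noncomputable def Mfree (k : Type) [CommRing k] (C : EICat) (i : ℕ) : CMod k C where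
  V j := C.Hom i j →₀ k
  act f := Finsupp.lmapDomain k k (fun γ => C.comp f γ)
  act_id j := by
    have h : (fun γ : C.Hom i j => C.comp (C.idm j) γ) = fun γ => γ :=
      funext fun γ => C.id_comp γ
    ext x a
    simp [Finsupp.lmapDomain, h]
  act_comp f g := by
    have h : (fun γ : C.Hom i _ => C.comp (C.comp f g) γ)
        = (fun γ => C.comp f γ) ∘ (fun γ => C.comp g γ) :=
      funext fun γ => C.assoc f g γ
    ext x a
    simp [Finsupp.lmapDomain, h, Finsupp.mapDomain_comp]

namespace Stmt19

variable {C : EICat}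

instance homFin (C : EICat) (i j : ℕ) : Finite (C.Hom i j) := C.homFinite i j

noncomputable instance homFintype (C : EICat) (i j : ℕ) : Fintype (C.Hom i j) :=
  Fintype.ofFinite _

/-- inverse of an endomorphism -/
noncomputable def einv (C : EICat) {m : ℕ} (g : C.Hom m m) : C.Hom m m :=
  (C.ei m g).choose

lemma comp_einv (C : EICat) {m : ℕ} (g : C.Hom m m) : C.comp g (einv C g) = C.idm m :=
  (C.ei m g).choose_spec.1

lemma einv_comp (C : EICat) {m : ℕ} (g : C.Hom m m) : C.comp (einv C g) g = C.idm m :=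
  (C.ei m g).choose_spec.2

lemma left_inv_unique {m : ℕ} {g h : C.Hom m m} (hh : C.comp h g = C.idm m) :
    h = einv C g := by
  have := congrArg (fun x => C.comp x (einv C g)) hh
  simpa [C.assoc, comp_einv C, C.comp_id, C.id_comp] using this

lemma comp_left_injective {i m : ℕ} (g : C.Hom m m) :
    Function.Injective (fun γ : C.Hom i m => C.comp g γ) := by
  intro a b hab
  have := congrArg (fun x => C.comp (einv C g) x) hab
  simpa [← C.assoc, einv_comp C, C.id_comp] using this

lemma einv_comp_left {m : ℕ} (g₀ g : C.Hom m m) :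
    C.comp (einv C (C.comp g₀ g)) g₀ = einv C g := by
  apply left_inv_unique
  have : C.comp (C.comp (einv C (C.comp g₀ g)) g₀) g
      = C.comp (einv C (C.comp g₀ g)) (C.comp g₀ g) := by rw [C.assoc]
  rw [this, einv_comp C]

lemma alph_self (α : ∀ j, C.Hom j (j + 1)) (i : ℕ) (h : i ≤ i) :
    C.alph α i h = C.idm i := by
  unfold EICat.alph
  exact Nat.leRecOn_self _

lemma alph_succ (α : ∀ j, C.Hom j (j + 1)) (i j : ℕ) (h : i ≤ j) (h' : i ≤ j + 1) :
    C.alph α i h' = C.comp (α j) (C.alph α i h) := by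
  unfold EICat.alph
  exact Nat.leRecOn_succ h _

/-- Every morphism into `j+1` from `i ≤ j` factors through `j`. -/
lemma exists_factor (hA : C.TypeAInf) :
    ∀ (d : ℕ) {i j : ℕ}, j - i = d → i ≤ j → ∀ f : C.Hom i (j + 1),
      ∃ (β : C.Hom j (j + 1)) (γ : C.Hom i j), f = C.comp β γ := by
  intro d
  induction d using Nat.strong_induction_on with
  | _ d ih =>
    intro i j hd hij f
    rcases Nat.eq_or_lt_of_le hij with heq | hlt
    · subst heq
      exact ⟨f, C.idm i, (C.comp_id f).symm⟩
    · -- i < j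
      have hnotiso : ¬ C.IsIso f := by
        rintro ⟨g, -, -⟩
        have : j + 1 ≤ i := (C.nonempty_iff (j+1) i).1 ⟨g⟩
        omega
      have hnotunf : ¬ C.Unfact f := by
        intro hu
        have := (hA i (j + 1)).1 ⟨f, hu⟩
        omega
      rw [EICat.Unfact, not_and_or] at hnotunf
      rcases hnotunf with h | h
      · exact absurd hnotiso h
      push_neg at h
      obtain ⟨l, b₂, b₁, hf, hb₁, hb₂⟩ := h
      have hl1 : l ≤ j + 1 := (C.nonempty_iff l (j+1)).1 ⟨b₁⟩
      have hil : i ≤ l := (C.nonempty_iff i l).1 ⟨b₂⟩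
      have hlj : l ≤ j := by
        rcases Nat.eq_or_lt_of_le hl1 with h1 | h1
        · exfalso; subst h1; exact hb₁ ⟨einv C b₁, comp_einv C b₁, einv_comp C b₁⟩
        · omega
      have hilt : i < l := by
        rcases Nat.eq_or_lt_of_le hil with h1 | h1
        · exfalso; subst h1; exact hb₂ ⟨einv C b₂, comp_einv C b₂, einv_comp C b₂⟩
        · exact h1
      obtain ⟨β, γ₁, hb⟩ := ih (j - l) (by omega) rfl hlj b₁
      exact ⟨β, C.comp γ₁ b₂, by rw [hf, hb, C.assoc]⟩

/-- `G_m` acts transitively on `C(i,m)` with basepoint `alph`. -/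
lemma exists_trans (hA : C.TypeAInf) (hT : C.TransCond) (α : ∀ j, C.Hom j (j + 1))
    {i : ℕ} : ∀ {m : ℕ} (him : i ≤ m) (γ : C.Hom i m),
      ∃ g : C.Hom m m, C.comp g (C.alph α i him) = γ := by
  intro m
  induction m with
  | zero =>
    intro him γ
    interval_cases i
    exact ⟨γ, by rw [alph_self, C.comp_id]⟩
  | succ m ihm =>
    intro him γ
    rcases Nat.eq_or_lt_of_le him with heq | hlt
    · subst heq
      exact ⟨γ, by rw [alph_self, C.comp_id]⟩
    · have him' : i ≤ m := by omega
      obtain ⟨β, γ', hf⟩ := exists_factor hA (m - i) rfl him' γ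
      obtain ⟨g', hg'⟩ := ihm him' γ'
      -- γ = β (g' x_m);  β = e α_m; α_m g' = e₂ α_m
      obtain ⟨e, he⟩ := hT m (α m) β
      obtain ⟨e₂, he₂⟩ := hT m (α m) (C.comp (α m) g')
      refine ⟨C.comp e e₂, ?_⟩
      rw [alph_succ α i m him' him]
      calc C.comp (C.comp e e₂) (C.comp (α m) (C.alph α i him'))
          = C.comp e (C.comp (C.comp e₂ (α m)) (C.alph α i him')) := by
            rw [C.assoc, C.assoc]
        _ = C.comp e (C.comp (C.comp (α m) g') (C.alph α i him')) := by rw [he₂]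
        _ = C.comp (C.comp e (α m)) (C.comp g' (C.alph α i him')) := by
            rw [C.assoc, C.assoc]
        _ = γ := by rw [he, hg', hf]

end Stmt19
namespace Stmt19
section Lin

variable (k : Type) [Field k] [CharZero k] (C : EICat)

/-- the action of a morphism on the free module, by composition -/
noncomputable def rA {i j l : ℕ} (β : C.Hom j l) :
    (C.Hom i j →₀ k) →ₗ[k] (C.Hom i l →₀ k) :=
  Finsupp.lmapDomain k k (fun γ => C.comp β γ)

variable {k C}

lemma rA_apply {i j l : ℕ} (β : C.Hom j l) (v : C.Hom i j →₀ k) :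
    rA k C β v = Finsupp.mapDomain (fun γ => C.comp β γ) v := rfl

lemma act_eq {i j l : ℕ} (β : C.Hom j l) (v : C.Hom i j →₀ k) :
    (Mfree k C i).act β v = rA k C β v := rfl

lemma rA_rA {i j l m : ℕ} (f : C.Hom l m) (g : C.Hom j l) (v : C.Hom i j →₀ k) :
    rA k C f (rA k C g v) = rA k C (C.comp f g) v := by
  have h : (fun γ : C.Hom i j => C.comp (C.comp f g) γ)
      = (fun γ : C.Hom i l => C.comp f γ) ∘ (fun γ => C.comp g γ) :=
    funext fun γ => C.assoc f g γ
  rw [rA_apply, rA_apply, rA_apply, h, Finsupp.mapDomain_comp]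

lemma rA_id {i m : ℕ} (v : C.Hom i m →₀ k) : rA k C (C.idm m) v = v := by
  have h : (fun γ : C.Hom i m => C.comp (C.idm m) γ) = id := funext fun γ => C.id_comp γ
  rw [rA_apply, h, Finsupp.mapDomain_id]

lemma rA_coeff {i m : ℕ} (g : C.Hom m m) (v : C.Hom i m →₀ k) (γ : C.Hom i m) :
    (rA k C g v) (C.comp g γ) = v γ := by
  rw [rA_apply]
  exact Finsupp.mapDomain_apply (comp_left_injective g) v γ

variable (k C)

/-- stabilizer of `x₀` in `G_m`, as a finset -/
noncomputable def stab {i m : ℕ} (x₀ : C.Hom i m) : Finset (C.Hom m m) :=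
  @Finset.filter _ (fun h => C.comp h x₀ = x₀) (fun _ => Classical.propDecidable _)
    Finset.univ

variable {k C}

lemma mem_stab {i m : ℕ} {x₀ : C.Hom i m} {h : C.Hom m m} :
    h ∈ stab C x₀ ↔ C.comp h x₀ = x₀ := by
  unfold stab
  simp [Finset.mem_filter]

lemma idm_mem_stab {i m : ℕ} (x₀ : C.Hom i m) : C.idm m ∈ stab C x₀ :=
  mem_stab.2 (C.id_comp x₀)

lemma mul_mem_stab {i m : ℕ} {x₀ : C.Hom i m} {h₁ h₂ : C.Hom m m}
    (H1 : h₁ ∈ stab C x₀) (H2 : h₂ ∈ stab C x₀) : C.comp h₁ h₂ ∈ stab C x₀ := by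
  rw [mem_stab] at *
  rw [C.assoc, H2, H1]

lemma einv_mem_stab {i m : ℕ} {x₀ : C.Hom i m} {h : C.Hom m m}
    (H : h ∈ stab C x₀) : einv C h ∈ stab C x₀ := by
  rw [mem_stab] at *
  conv_lhs => rw [← H]
  rw [← C.assoc, einv_comp, C.id_comp]

lemma stab_card_ne_zero {i m : ℕ} (x₀ : C.Hom i m) :
    (((stab C x₀).card : k)) ≠ 0 := by
  have : (stab C x₀).Nonempty := ⟨C.idm m, idm_mem_stab x₀⟩
  exact_mod_cast (Finset.card_pos.2 this).ne'

variable (k C)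

/-- averaging over the stabilizer of `x₀` -/
noncomputable def avg {i m : ℕ} (x₀ : C.Hom i m) :
    (C.Hom i m →₀ k) →ₗ[k] (C.Hom i m →₀ k) :=
  (((stab C x₀).card : k))⁻¹ • ∑ h ∈ stab C x₀, rA k C h

variable {k C}

lemma avg_apply {i m : ℕ} (x₀ : C.Hom i m) (v : C.Hom i m →₀ k) :
    avg k C x₀ v = (((stab C x₀).card : k))⁻¹ • ∑ h ∈ stab C x₀, rA k C h v := by
  simp [avg, LinearMap.sum_apply]

/-- reindexing a sum over the stabilizer by right multiplication -/
lemma stab_sum_reindex {i m : ℕ} {x₀ : C.Hom i m} {h₀ : C.Hom m m}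
    (H0 : h₀ ∈ stab C x₀) {M : Type} [AddCommMonoid M] (F : C.Hom m m → M) :
    ∑ h ∈ stab C x₀, F (C.comp h h₀) = ∑ h ∈ stab C x₀, F h := by
  apply Finset.sum_nbij' (fun h => C.comp h h₀) (fun h => C.comp h (einv C h₀))
  · intro a ha; exact mul_mem_stab ha H0
  · intro a ha; exact mul_mem_stab ha (einv_mem_stab H0)
  · intro a _; rw [C.assoc, comp_einv, C.comp_id]
  · intro a _; rw [C.assoc, einv_comp, C.comp_id]
  · intro a _; rfl

lemma stab_sum_reindex_left {i m : ℕ} {x₀ : C.Hom i m} {h₀ : C.Hom m m}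
    (H0 : h₀ ∈ stab C x₀) {M : Type} [AddCommMonoid M] (F : C.Hom m m → M) :
    ∑ h ∈ stab C x₀, F (C.comp h₀ h) = ∑ h ∈ stab C x₀, F h := by
  apply Finset.sum_nbij' (fun h => C.comp h₀ h) (fun h => C.comp (einv C h₀) h)
  · intro a ha; exact mul_mem_stab H0 ha
  · intro a ha; exact mul_mem_stab (einv_mem_stab H0) ha
  · intro a _; rw [← C.assoc, einv_comp, C.id_comp]
  · intro a _; rw [← C.assoc, comp_einv, C.id_comp]
  · intro a _; rfl

/-- `avg` absorbs the action of stabilizer elements on the right -/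
lemma avg_rA {i m : ℕ} {x₀ : C.Hom i m} {h₀ : C.Hom m m} (H0 : h₀ ∈ stab C x₀)
    (v : C.Hom i m →₀ k) : avg k C x₀ (rA k C h₀ v) = avg k C x₀ v := by
  rw [avg_apply, avg_apply]
  congr 1
  rw [← stab_sum_reindex H0 (fun h => rA k C h v)]
  exact Finset.sum_congr rfl fun h _ => (rA_rA h h₀ v)

/-- stabilizer elements fix `avg v` -/
lemma rA_avg {i m : ℕ} {x₀ : C.Hom i m} {h₀ : C.Hom m m} (H0 : h₀ ∈ stab C x₀)
    (v : C.Hom i m →₀ k) : rA k C h₀ (avg k C x₀ v) = avg k C x₀ v := by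
  conv_lhs => rw [avg_apply]
  rw [map_smul, map_sum]
  conv_rhs => rw [avg_apply]
  congr 1
  rw [← stab_sum_reindex_left H0 (fun h => rA k C h v)]
  exact Finset.sum_congr rfl fun h _ => (rA_rA h₀ h v)

/-- invariant vectors are fixed by `avg` -/
lemma avg_of_invariant {i m : ℕ} {x₀ : C.Hom i m} {v : C.Hom i m →₀ k}
    (hv : ∀ h ∈ stab C x₀, rA k C h v = v) : avg k C x₀ v = v := by
  rw [avg_apply, Finset.sum_congr rfl hv, Finset.sum_const,
    ← Nat.cast_smul_eq_nsmul k, smul_smul,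
    inv_mul_cancel₀ (stab_card_ne_zero x₀), one_smul]

/-- `avg v` is invariant -/
lemma avg_invariant {i m : ℕ} (x₀ : C.Hom i m) (v : C.Hom i m →₀ k) :
    ∀ h ∈ stab C x₀, rA k C h (avg k C x₀ v) = avg k C x₀ v :=
  fun _ H0 => rA_avg H0 v

/-- the coefficient of `avg v` at the basepoint -/
lemma avg_coeff_base {i m : ℕ} (x₀ : C.Hom i m) (v : C.Hom i m →₀ k) :
    (avg k C x₀ v) x₀ = v x₀ := by
  rw [avg_apply, Finsupp.smul_apply, Finsupp.finset_sum_apply]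
  have : ∀ h ∈ stab C x₀, (rA k C h v) x₀ = v x₀ := by
    intro h H0
    conv_lhs => rw [← mem_stab.1 H0]
    exact rA_coeff h v x₀
  rw [Finset.sum_congr rfl this, Finset.sum_const,
    ← Nat.cast_smul_eq_nsmul k, smul_smul,
    inv_mul_cancel₀ (stab_card_ne_zero x₀), one_smul]

/-- averaging stays in a `G`-stable submodule (char 0) -/
lemma avg_mem {i m : ℕ} (x₀ : C.Hom i m) {W : Submodule k (C.Hom i m →₀ k)}
    (hW : ∀ g : C.Hom m m, ∀ w ∈ W, rA k C g w ∈ W) {v : C.Hom i m →₀ k} (hv : v ∈ W) :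
    avg k C x₀ v ∈ W := by
  rw [avg_apply]
  exact Submodule.smul_mem _ _ (Submodule.sum_mem _ fun h _ => hW h v hv)

end Lin
end Stmt19
namespace Stmt19
section LemM

variable {k : Type} [Field k] [CharZero k] {C : EICat}

lemma card_endo_ne_zero (m : ℕ) : ((Fintype.card (C.Hom m m) : k)) ≠ 0 := by
  have : 0 < Fintype.card (C.Hom m m) := Fintype.card_pos_iff.2 ⟨C.idm m⟩
  exact_mod_cast this.ne'

/-- Lemma M: a `G`-stable submodule of `k C(i,m)` is spanned by the
`G`-translates of its `H`-averages. -/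
lemma lemmaM (hA : C.TypeAInf) (hT : C.TransCond) (α : ∀ j, C.Hom j (j + 1))
    {i m : ℕ} (him : i ≤ m) (W : Submodule k (C.Hom i m →₀ k))
    (hW : ∀ g : C.Hom m m, ∀ w ∈ W, rA k C g w ∈ W) :
    W ≤ Submodule.span k
      {x | ∃ (g : C.Hom m m) (w : C.Hom i m →₀ k), w ∈ W ∧
        x = rA k C g (avg k C (C.alph α i him) w)} := by
  set x₀ := C.alph α i him with hx₀
  set S : Set (C.Hom i m →₀ k) :=
    {x | ∃ (g : C.Hom m m) (w : C.Hom i m →₀ k), w ∈ W ∧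
      x = rA k C g (avg k C x₀ w)} with hS
  set U := Submodule.span k S with hU
  -- U ≤ W
  have hUW : U ≤ W := by
    rw [hU, Submodule.span_le]
    rintro x ⟨g, w, hw, rfl⟩
    exact hW g _ (avg_mem x₀ hW hw)
  -- U is G-stable
  have hUstab : ∀ g : C.Hom m m, ∀ u ∈ U, rA k C g u ∈ U := by
    intro g u hu
    induction hu using Submodule.span_induction with
    | mem x hx =>
      obtain ⟨g', w, hw, rfl⟩ := hx
      rw [rA_rA]
      exact Submodule.subset_span ⟨C.comp g g', w, hw, rfl⟩
    | zero => simpa using U.zero_mem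
    | add x y _ _ hx hy => rw [map_add]; exact U.add_mem hx hy
    | smul c x _ hx => rw [map_smul]; exact U.smul_mem c hx
  -- complement and averaged projection
  obtain ⟨q, hq⟩ := Submodule.exists_isCompl U
  set pU : (C.Hom i m →₀ k) →ₗ[k] (C.Hom i m →₀ k) :=
    U.subtype ∘ₗ (U.projectionOnto q hq) with hpU
  have hpU_mem : ∀ v, pU v ∈ U := fun v => (U.projectionOnto q hq v).2
  have hpU_id : ∀ u ∈ U, pU u = u := by
    intro u hu
    show (U.subtype) (U.projectionOnto q hq u) = u
    rw [show u = ((⟨u, hu⟩ : U) : C.Hom i m →₀ k) from rfl,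
      Submodule.projectionOnto_apply_left hq]
    rfl
  set cG : k := (Fintype.card (C.Hom m m) : k) with hcG
  set P : (C.Hom i m →₀ k) →ₗ[k] (C.Hom i m →₀ k) :=
    cG⁻¹ • ∑ g : C.Hom m m, (rA k C g) ∘ₗ pU ∘ₗ (rA k C (einv C g)) with hP
  have hP_apply : ∀ v, P v = cG⁻¹ • ∑ g : C.Hom m m, rA k C g (pU (rA k C (einv C g) v)) := by
    intro v; rw [hP]; simp [LinearMap.sum_apply]
  -- P lands in U
  have hPU : ∀ v, P v ∈ U := by
    intro v
    rw [hP_apply]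
    exact U.smul_mem _ (Submodule.sum_mem _ fun g _ => hUstab g _ (hpU_mem _))
  -- P is the identity on U
  have hPid : ∀ u ∈ U, P u = u := by
    intro u hu
    rw [hP_apply]
    have : ∀ g : C.Hom m m, rA k C g (pU (rA k C (einv C g) u)) = u := by
      intro g
      rw [hpU_id _ (hUstab _ _ hu), rA_rA, comp_einv, rA_id]
    rw [Finset.sum_congr rfl fun g _ => this g, Finset.sum_const, Finset.card_univ,
      ← Nat.cast_smul_eq_nsmul k, smul_smul, ← hcG,
      inv_mul_cancel₀ (card_endo_ne_zero m), one_smul]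
  -- P is equivariant
  have hPequi : ∀ (g₀ : C.Hom m m) (v), P (rA k C g₀ v) = rA k C g₀ (P v) := by
    intro g₀ v
    rw [hP_apply, hP_apply, map_smul, map_sum]
    congr 1
    have hbij : Function.Bijective (fun g : C.Hom m m => C.comp g₀ g) :=
      Finite.injective_iff_bijective.1 (comp_left_injective g₀)
    refine (Fintype.sum_bijective _ hbij
      (fun g => rA k C g₀ (rA k C g (pU (rA k C (einv C g) v))))
      (fun g => rA k C g (pU (rA k C (einv C g) (rA k C g₀ v)))) ?_).symm
    intro g
    simp only [rA_rA, einv_comp_left]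
  -- the main argument
  intro w hw
  set r := w - P w with hr
  have hrW : r ∈ W := W.sub_mem hw (hUW (hPU w))
  have hPr : P r = 0 := by
    rw [hr, map_sub, hPid _ (hPU w), sub_self]
  have hr0 : r = 0 := by
    ext γ
    obtain ⟨g, rfl⟩ := exists_trans hA hT α him γ
    -- consider u_g := avg (rA (einv g) r)
    set ug := avg k C x₀ (rA k C (einv C g) r) with hug
    have hugU : ug ∈ U := by
      apply Submodule.subset_span
      exact ⟨C.idm m, rA k C (einv C g) r, hW _ _ hrW, by rw [rA_id]⟩
    have hugP : P ug = 0 := by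
      rw [hug, avg_apply, map_smul, map_sum]
      have : ∀ h ∈ stab C x₀, P (rA k C h (rA k C (einv C g) r)) = 0 := by
        intro h _
        rw [hPequi, hPequi, hPr, map_zero, map_zero]
      rw [Finset.sum_congr rfl this, Finset.sum_const, smul_zero, smul_zero]
    have hug0 : ug = 0 := by rw [← hPid _ hugU, hugP]
    have : (rA k C (einv C g) r) x₀ = 0 := by
      rw [← avg_coeff_base x₀, ← hug, hug0]; rfl
    have hx : x₀ = C.comp (einv C g) (C.comp g x₀) := by
      rw [← C.assoc, einv_comp, C.id_comp]
    rw [hx, rA_coeff] at this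
    simpa using this
  have : w = P w := by rwa [sub_eq_zero] at hr0
  rw [this]
  exact hPU w

end LemM
end Stmt19
namespace Stmt19
section Psi

variable {k : Type} [Field k] [CharZero k] {C : EICat}

attribute [local instance] Classical.propDecidable

lemma mapDomain_coeff {A B : Type} (f : A → B) (v : A →₀ k) (y : B) :
    (Finsupp.mapDomain f v) y = ∑ a ∈ v.support, if f a = y then v a else 0 := by
  rw [Finsupp.mapDomain, Finsupp.sum_apply, Finsupp.sum]
  exact Finset.sum_congr rfl fun a _ => Finsupp.single_apply

/-- moving a stabilizer element across `α j` -/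
lemma stab_exchange (hT : C.TransCond) (α : ∀ j, C.Hom j (j + 1)) {i j : ℕ}
    (hij : i ≤ j) {h : C.Hom j j} (hh : h ∈ stab C (C.alph α i hij)) :
    ∃ h' ∈ stab C (C.comp (α j) (C.alph α i hij)),
      C.comp (α j) h = C.comp h' (α j) := by
  obtain ⟨e, he⟩ := hT j (α j) (C.comp (α j) h)
  refine ⟨e, mem_stab.2 ?_, he.symm⟩
  rw [← C.assoc, he, C.assoc, mem_stab.1 hh]

/-- `ψ` is insensitive to pre-averaging -/
lemma psi_avg (hT : C.TransCond) (α : ∀ j, C.Hom j (j + 1)) {i j : ℕ}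
    (hij : i ≤ j) (v : C.Hom i j →₀ k) :
    avg k C (C.comp (α j) (C.alph α i hij))
        (rA k C (α j) (avg k C (C.alph α i hij) v))
      = avg k C (C.comp (α j) (C.alph α i hij)) (rA k C (α j) v) := by
  set x := C.alph α i hij
  set x' := C.comp (α j) x
  rw [avg_apply x, map_smul, map_sum, map_smul, map_sum]
  have : ∀ h ∈ stab C x,
      avg k C x' (rA k C (α j) (rA k C h v)) = avg k C x' (rA k C (α j) v) := by
    intro h hh
    obtain ⟨h', hh', hex⟩ := stab_exchange hT α hij hh
    rw [rA_rA, hex, ← rA_rA, avg_rA hh']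
  rw [Finset.sum_congr rfl this, Finset.sum_const, ← Nat.cast_smul_eq_nsmul k,
    smul_smul, inv_mul_cancel₀ (stab_card_ne_zero x), one_smul]

/-- surjectivity step: invariant vectors at level `j+1` come from level `j` -/
lemma surj_step (hT : C.TransCond) (α : ∀ j, C.Hom j (j + 1)) {i j : ℕ}
    (hij : i ≤ j)
    (hsur : ∀ δ : C.Hom i (j + 1), ∃ γ : C.Hom i j,
      C.orbRelS α hij (C.comp (α j) γ) δ)
    (u : C.Hom i (j + 1) →₀ k)
    (hu : ∀ h' ∈ stab C (C.comp (α j) (C.alph α i hij)), rA k C h' u = u) :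
    ∃ v : C.Hom i j →₀ k, (∀ h ∈ stab C (C.alph α i hij), rA k C h v = v) ∧
      avg k C (C.comp (α j) (C.alph α i hij)) (rA k C (α j) v) = u := by
  set x := C.alph α i hij with hx
  set x' := C.comp (α j) x with hx'
  -- choose preimages for each δ
  have hch : ∀ δ : C.Hom i (j + 1), ∃ γ : C.Hom i j,
      avg k C x' ((Finsupp.single (C.comp (α j) γ) (1 : k)))
        = avg k C x' (Finsupp.single δ 1) := by
    intro δ
    obtain ⟨γ, h', hst, hcomp⟩ := hsur δ
    refine ⟨γ, ?_⟩
    have hmem : h' ∈ stab C x' := mem_stab.2 hst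
    have : Finsupp.single δ (1:k) = rA k C h' (Finsupp.single (C.comp (α j) γ) 1) := by
      rw [rA_apply, Finsupp.mapDomain_single, hcomp]
    rw [this, avg_rA hmem]
  choose γf hγf using hch
  set w : C.Hom i j →₀ k := ∑ δ ∈ u.support, (u δ) • Finsupp.single (γf δ) 1 with hw
  refine ⟨avg k C x w, avg_invariant x w, ?_⟩
  rw [psi_avg hT α hij, hw, map_sum, map_sum]
  have : ∀ δ ∈ u.support,
      avg k C x' (rA k C (α j) ((u δ) • Finsupp.single (γf δ) 1))
        = avg k C x' ((u δ) • Finsupp.single δ 1) := by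
    intro δ _
    rw [map_smul, map_smul, show rA k C (α j) (Finsupp.single (γf δ) (1:k))
        = Finsupp.single (C.comp (α j) (γf δ)) 1 by rw [rA_apply, Finsupp.mapDomain_single],
      hγf δ, ← map_smul]
  rw [Finset.sum_congr rfl this, ← map_sum (avg k C x')
    (fun δ => (u δ) • Finsupp.single δ (1:k)) u.support]
  have hu' : ∑ δ ∈ u.support, (u δ) • Finsupp.single δ (1:k) = u := by
    conv_rhs => rw [← Finsupp.sum_single u]
    rw [Finsupp.sum]
    exact Finset.sum_congr rfl fun δ _ => by rw [Finsupp.smul_single, smul_eq_mul, mul_one]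
  rw [hu']
  exact avg_of_invariant hu

/-- injectivity step: `ψ` is injective on invariant vectors -/
lemma inj_step (α : ∀ j, C.Hom j (j + 1)) {i j : ℕ} (hij : i ≤ j)
    (hinj : ∀ γ γ' : C.Hom i j,
      C.orbRelS α hij (C.comp (α j) γ) (C.comp (α j) γ') → C.orbRel α hij γ γ')
    (v : C.Hom i j →₀ k) (hv : ∀ h ∈ stab C (C.alph α i hij), rA k C h v = v)
    (h0 : avg k C (C.comp (α j) (C.alph α i hij)) (rA k C (α j) v) = 0) :
    v = 0 := by
  set x := C.alph α i hij with hx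
  set x' := C.comp (α j) x with hx'
  ext γ₀
  by_cases hvγ : v γ₀ = 0
  · simpa using hvγ
  exfalso
  set δ₀ := C.comp (α j) γ₀ with hδ₀
  have hev := congrArg (fun u : C.Hom i (j+1) →₀ k => u δ₀) h0
  simp only [Finsupp.coe_zero, Pi.zero_apply] at hev
  rw [avg_apply, Finsupp.smul_apply, Finsupp.finset_sum_apply] at hev
  -- rewrite each coefficient
  have hterm : ∀ h' ∈ stab C x',
      (rA k C h' (rA k C (α j) v)) δ₀
        = ∑ γ ∈ v.support, if C.comp (C.comp h' (α j)) γ = δ₀ then v γ₀ else 0 := by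
    intro h' hh'
    rw [rA_rA, rA_apply, mapDomain_coeff]
    refine Finset.sum_congr rfl fun γ hγ => ?_
    by_cases hc : C.comp (C.comp h' (α j)) γ = δ₀
    · rw [if_pos hc, if_pos hc]
      -- from hc deduce v γ = v γ₀
      have horb : C.orbRelS α hij (C.comp (α j) γ) (C.comp (α j) γ₀) := by
        refine ⟨h', mem_stab.1 hh', ?_⟩
        rw [← C.assoc]
        exact hc
      obtain ⟨h, hst, hcomp⟩ := hinj γ γ₀ horb
      have hmem : h ∈ stab C x := mem_stab.2 hst
      calc v γ = (rA k C h v) (C.comp h γ) := (rA_coeff h v γ).symm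
        _ = v γ₀ := by rw [hv h hmem, hcomp]
    · rw [if_neg hc, if_neg hc]
  rw [Finset.sum_congr rfl hterm] at hev
  -- collapse the double sum
  have hcount : ∀ h' ∈ stab C x',
      (∑ γ ∈ v.support, if C.comp (C.comp h' (α j)) γ = δ₀ then v γ₀ else 0)
        = ((v.support.filter (fun γ => C.comp (C.comp h' (α j)) γ = δ₀)).card : k) * v γ₀ := by
    intro h' _
    classical
    rw [← Finset.sum_filter, Finset.sum_const, ← Nat.cast_smul_eq_nsmul k, smul_eq_mul]
  rw [Finset.sum_congr rfl hcount, ← Finset.sum_mul, smul_eq_mul] at hev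
  have hprod := (mul_eq_zero.1 hev).resolve_left (inv_ne_zero (stab_card_ne_zero x'))
  have hsum0 := (mul_eq_zero.1 hprod).resolve_right hvγ
  rw [← Nat.cast_sum] at hsum0
  have hidm : C.idm (j+1) ∈ stab C x' := idm_mem_stab x'
  have hγ₀mem : γ₀ ∈ v.support.filter
      (fun γ => C.comp (C.comp (C.idm (j+1)) (α j)) γ = δ₀) := by
    rw [Finset.mem_filter]
    exact ⟨Finsupp.mem_support_iff.2 hvγ, by rw [C.id_comp]⟩
  have hpos : 0 < ∑ h' ∈ stab C x',
      (v.support.filter (fun γ => C.comp (C.comp h' (α j)) γ = δ₀)).card := by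
    refine lt_of_lt_of_le (Finset.card_pos.2 ⟨γ₀, hγ₀mem⟩) ?_
    exact Finset.single_le_sum
      (f := fun h' => (v.support.filter
        (fun γ => C.comp (C.comp h' (α j)) γ = δ₀)).card)
      (fun h' _ => Nat.zero_le _) hidm
  have : ((∑ h' ∈ stab C x',
      (v.support.filter (fun γ => C.comp (C.comp h' (α j)) γ = δ₀)).card : ℕ) : k) ≠ 0 := by
    exact_mod_cast hpos.ne'
  exact this hsum0

end Psi
end Stmt19
namespace Stmt19
section Key

variable {k : Type} [Field k] [CharZero k] {C : EICat}

/-- the submodule of `H`-invariant vectors -/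
noncomputable def invSub (k : Type) [Field k] (C : EICat) {i m : ℕ}
    (x₀ : C.Hom i m) : Submodule k (C.Hom i m →₀ k) where
  carrier := {v | ∀ h ∈ stab C x₀, rA k C h v = v}
  add_mem' := by intro a b ha hb h hh; rw [map_add, ha h hh, hb h hh]
  zero_mem' := by intro h hh; rw [map_zero]
  smul_mem' := by intro c a ha h hh; rw [map_smul, ha h hh]

lemma mem_invSub {i m : ℕ} {x₀ : C.Hom i m} {v : C.Hom i m →₀ k} :
    v ∈ invSub k C x₀ ↔ ∀ h ∈ stab C x₀, rA k C h v = v := Iff.rfl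

lemma finrank_map_eq {V V' : Type} [AddCommGroup V] [Module k V] [FiniteDimensional k V]
    [AddCommGroup V'] [Module k V'] (f : V →ₗ[k] V') (p : Submodule k V)
    (hinj : ∀ v ∈ p, f v = 0 → v = 0) :
    Module.finrank k (p.map f) = Module.finrank k p := by
  have hker : LinearMap.ker (f.domRestrict p) = ⊥ := by
    rw [LinearMap.ker_eq_bot']
    rintro ⟨v, hv⟩ h
    exact Subtype.ext (hinj v hv h)
  have h := LinearMap.finrank_range_add_finrank_ker (f.domRestrict p)
  rw [hker, finrank_bot, add_zero, LinearMap.range_domRestrict] at h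
  exact h

/-- the image of `D_j` under `ψ` lands in `D_{j+1}` -/
lemma Dmap_le (hT : C.TransCond) (α : ∀ j, C.Hom j (j + 1)) {i j : ℕ} (hij : i ≤ j)
    (W1 : Submodule k (C.Hom i j →₀ k)) (W2 : Submodule k (C.Hom i (j + 1) →₀ k))
    (hstep : ∀ w ∈ W1, rA k C (α j) w ∈ W2) :
    (W1.map (avg k C (C.alph α i hij))).map
        ((avg k C (C.comp (α j) (C.alph α i hij))) ∘ₗ rA k C (α j))
      ≤ W2.map (avg k C (C.comp (α j) (C.alph α i hij))) := by
  rintro _ ⟨_, ⟨w, hw, rfl⟩, rfl⟩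
  exact ⟨rA k C (α j) w, hstep w hw, (psi_avg hT α hij w).symm⟩

lemma Dmap_rank (α : ∀ j, C.Hom j (j + 1)) {i j : ℕ} (hij : i ≤ j)
    (hinj : ∀ γ γ' : C.Hom i j,
      C.orbRelS α hij (C.comp (α j) γ) (C.comp (α j) γ') → C.orbRel α hij γ γ')
    (W1 : Submodule k (C.Hom i j →₀ k)) :
    Module.finrank k ((W1.map (avg k C (C.alph α i hij))).map
        ((avg k C (C.comp (α j) (C.alph α i hij))) ∘ₗ rA k C (α j)))
      = Module.finrank k (W1.map (avg k C (C.alph α i hij))) := by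
  apply finrank_map_eq
  rintro _ ⟨w, hw, rfl⟩ h0
  exact inj_step α hij hinj _ (avg_invariant _ w) h0

/-- rank of `D` is nondecreasing -/
lemma L1 (hT : C.TransCond) (α : ∀ j, C.Hom j (j + 1)) {i j : ℕ} (hij : i ≤ j)
    (hinj : ∀ γ γ' : C.Hom i j,
      C.orbRelS α hij (C.comp (α j) γ) (C.comp (α j) γ') → C.orbRel α hij γ γ')
    (W1 : Submodule k (C.Hom i j →₀ k)) (W2 : Submodule k (C.Hom i (j + 1) →₀ k))
    (hstep : ∀ w ∈ W1, rA k C (α j) w ∈ W2) :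
    Module.finrank k (W1.map (avg k C (C.alph α i hij)))
      ≤ Module.finrank k (W2.map (avg k C (C.comp (α j) (C.alph α i hij)))) := by
  rw [← Dmap_rank α hij hinj W1]
  exact Submodule.finrank_mono (Dmap_le hT α hij W1 W2 hstep)

/-- rank of `Inv` is nonincreasing -/
lemma L2 (hT : C.TransCond) (α : ∀ j, C.Hom j (j + 1)) {i j : ℕ} (hij : i ≤ j)
    (hsur : ∀ δ : C.Hom i (j + 1), ∃ γ : C.Hom i j,
      C.orbRelS α hij (C.comp (α j) γ) δ) :
    Module.finrank k (invSub k C (C.comp (α j) (C.alph α i hij)))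
      ≤ Module.finrank k (invSub k C (C.alph α i hij)) := by
  have hle : invSub k C (C.comp (α j) (C.alph α i hij))
      ≤ (invSub k C (C.alph α i hij)).map
        ((avg k C (C.comp (α j) (C.alph α i hij))) ∘ₗ rA k C (α j)) := by
    intro u hu
    obtain ⟨v, hv, hψ⟩ := surj_step hT α hij hsur u hu
    exact ⟨v, hv, hψ⟩
  exact le_trans (Submodule.finrank_mono hle) (Submodule.finrank_map_le _ _)

/-- rank of `D` is bounded by rank of `Inv` -/
lemma L3 {i j : ℕ} (x₀ : C.Hom i j) (W1 : Submodule k (C.Hom i j →₀ k)) :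
    Module.finrank k (W1.map (avg k C x₀)) ≤ Module.finrank k (invSub k C x₀) := by
  apply Submodule.finrank_mono
  rintro _ ⟨w, hw, rfl⟩
  exact avg_invariant x₀ w

lemma rA_avg_mem_span (α : ∀ j, C.Hom j (j + 1)) {i j : ℕ}
    (x'' : C.Hom i (j + 1)) (g : C.Hom (j + 1) (j + 1)) (d : C.Hom i j →₀ k)
    (W1 : Submodule k (C.Hom i j →₀ k)) (hd : d ∈ W1) :
    rA k C g (avg k C x'' (rA k C (α j) d)) ∈ Submodule.span k
      {x | ∃ (β : C.Hom j (j + 1)) (w : C.Hom i j →₀ k), w ∈ W1 ∧ x = rA k C β w} := by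
  rw [avg_apply, map_smul, map_sum]
  refine Submodule.smul_mem _ _ (Submodule.sum_mem _ fun h' _ => ?_)
  rw [rA_rA, rA_rA]
  exact Submodule.subset_span ⟨C.comp (C.comp g h') (α j), d, hd, rfl⟩

/-- the generation step, once the ranks have stabilized -/
lemma L4 (hA : C.TypeAInf) (hT : C.TransCond) (α : ∀ j, C.Hom j (j + 1)) {i j : ℕ}
    (hij : i ≤ j) (hij' : i ≤ j + 1)
    (hinj : ∀ γ γ' : C.Hom i j,
      C.orbRelS α hij (C.comp (α j) γ) (C.comp (α j) γ') → C.orbRel α hij γ γ')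
    (W1 : Submodule k (C.Hom i j →₀ k)) (W2 : Submodule k (C.Hom i (j + 1) →₀ k))
    (hW1 : ∀ g : C.Hom j j, ∀ w ∈ W1, rA k C g w ∈ W1)
    (hW2 : ∀ g : C.Hom (j + 1) (j + 1), ∀ w ∈ W2, rA k C g w ∈ W2)
    (hstep : ∀ w ∈ W1, rA k C (α j) w ∈ W2)
    (hrank : Module.finrank k (W2.map (avg k C (C.comp (α j) (C.alph α i hij))))
      ≤ Module.finrank k (W1.map (avg k C (C.alph α i hij)))) :
    W2 ≤ Submodule.span k
      {x | ∃ (β : C.Hom j (j + 1)) (w : C.Hom i j →₀ k), w ∈ W1 ∧ x = rA k C β w} := by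
  have hbp : C.alph α i hij' = C.comp (α j) (C.alph α i hij) := alph_succ α i j hij hij'
  have hD : W2.map (avg k C (C.comp (α j) (C.alph α i hij)))
      = (W1.map (avg k C (C.alph α i hij))).map
        ((avg k C (C.comp (α j) (C.alph α i hij))) ∘ₗ rA k C (α j)) := by
    refine (Submodule.eq_of_le_of_finrank_le (Dmap_le hT α hij W1 W2 hstep) ?_).symm
    rw [Dmap_rank α hij hinj W1]
    exact hrank
  refine le_trans (lemmaM hA hT α hij' W2 hW2) (Submodule.span_le.2 ?_)
  rintro _ ⟨g, w', hw', rfl⟩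
  rw [hbp]
  have hmem : avg k C (C.comp (α j) (C.alph α i hij)) w'
      ∈ W2.map (avg k C (C.comp (α j) (C.alph α i hij))) := ⟨w', hw', rfl⟩
  rw [hD] at hmem
  obtain ⟨u, ⟨d, hd, rfl⟩, hu⟩ := hmem
  rw [← hu]
  exact rA_avg_mem_span α _ g (avg k C (C.alph α i hij) d) W1 (avg_mem _ hW1 hd)

/-- KEY LEMMA: eventually, `W (j+1)` is generated by `W j`. -/
lemma key (hA : C.TypeAInf) (hT : C.TransCond) (α : ∀ j, C.Hom j (j + 1))
    (hB : C.BijCond α) (i : ℕ) (W : ∀ j, Submodule k ((Mfree k C i).V j))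
    (hW : (Mfree k C i).Closed W) :
    ∃ n : ℕ, ∀ j, n ≤ j →
      W (j + 1) ≤ Submodule.span k
        {x | ∃ (β : C.Hom j (j + 1)) (w : C.Hom i j →₀ k), w ∈ W j ∧ x = rA k C β w} := by
  obtain ⟨N, hN⟩ := hB i
  set n₀ := max N i with hn₀
  have hin₀ : i ≤ n₀ := le_max_right N i
  have hle : ∀ t : ℕ, i ≤ n₀ + t := fun t => le_trans hin₀ (Nat.le_add_right _ _)
  have hNle : ∀ t : ℕ, N ≤ n₀ + t := fun t =>
    le_trans (le_max_left N i) (Nat.le_add_right _ _)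
  have hWst : ∀ m (g : C.Hom m m), ∀ w ∈ W m, rA k C g w ∈ W m := by
    intro m g w hw
    have := hW m m g w hw
    exact this
  have hWstep : ∀ m, ∀ w ∈ W m, rA k C (α m) w ∈ W (m + 1) := by
    intro m w hw
    have := hW m (m + 1) (α m) w hw
    exact this
  set F : ℕ → ℕ := fun t => Module.finrank k
      ((W (n₀ + t)).map (avg k C (C.alph α i (hle t)))) with hF
  set E : ℕ → ℕ := fun t => Module.finrank k (invSub k C (C.alph α i (hle t))) with hE
  have hmono : ∀ t, F t ≤ F (t + 1) := by
    intro t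
    have h1 := L1 hT α (hle t) ((hN (n₀ + t) (hle t) (hNle t)).1) (W (n₀ + t))
      (W (n₀ + t + 1)) (hWstep _)
    rwa [← alph_succ α i (n₀ + t) (hle t) (hle (t + 1))] at h1
  have hmono' : Monotone F := monotone_nat_of_le_succ hmono
  have hEanti : ∀ t, E (t + 1) ≤ E t := by
    intro t
    have h1 := L2 (k := k) hT α (hle t) ((hN (n₀ + t) (hle t) (hNle t)).2)
    rwa [← alph_succ α i (n₀ + t) (hle t) (hle (t + 1))] at h1
  have hEbound : ∀ t, E t ≤ E 0 := by
    intro t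
    induction t with
    | zero => exact le_refl _
    | succ t ih => exact le_trans (hEanti t) ih
  have hFbound : ∀ t, F t ≤ E 0 := fun t =>
    le_trans (L3 (C.alph α i (hle t)) (W (n₀ + t))) (hEbound t)
  have hbdd : BddAbove (Set.range F) := by
    refine ⟨E 0, ?_⟩
    rintro _ ⟨t, rfl⟩
    exact hFbound t
  have hsupmem := Nat.sSup_mem (Set.range_nonempty F) hbdd
  obtain ⟨t₀, ht₀⟩ := Set.mem_range.1 hsupmem
  refine ⟨n₀ + t₀, ?_⟩
  intro j hj
  obtain ⟨t, rfl⟩ : ∃ t, j = n₀ + t := ⟨j - n₀, by omega⟩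
  have htt : t₀ ≤ t := by omega
  have hrank : F (t + 1) ≤ F t := by
    calc F (t + 1) ≤ sSup (Set.range F) := le_csSup hbdd ⟨t + 1, rfl⟩
      _ = F t₀ := ht₀.symm
      _ ≤ F t := hmono' htt
  have h4 := L4 hA hT α (hle t) (hle (t + 1)) ((hN (n₀ + t) (hle t) (hNle t)).1)
    (W (n₀ + t)) (W (n₀ + t + 1)) (hWst _) (hWst _) (hWstep _) ?_
  · exact h4
  · rw [← alph_succ α i (n₀ + t) (hle t) (hle (t + 1))]
    exact hrank

end Key
end Stmt19
/-- under the transitivity and bijectivity conditions, over a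
field `k` of characteristic 0, every `kC`-submodule of `M(i)` is finitely
generated. -/
theorem stmt_19 (k : Type) [Field k] [CharZero k]
    (C : EICat) (hA : C.TypeAInf) (hT : C.TransCond)
    (α : ∀ j, C.Hom j (j + 1)) (hB : C.BijCond α) (i : ℕ) :
    ∀ W : ∀ j, Submodule k ((Mfree k C i).V j),
      (Mfree k C i).Closed W → (Mfree k C i).SubFG W := by
  classical
  intro W hW
  obtain ⟨n, hn⟩ := Stmt19.key hA hT α hB i W hW
  have hfg : ∀ j : ℕ, ∃ s : Finset (C.Hom i j →₀ k),
      Submodule.span k (s : Set (C.Hom i j →₀ k)) = W j := by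
    intro j
    haveI : IsNoetherian k ((Mfree k C i).V j) :=
      (inferInstance : IsNoetherian k (C.Hom i j →₀ k))
    have h1 : Submodule.FG (W j) :=
      IsNoetherian.noetherian (W j)
    exact h1
  choose s hs using hfg
  set I := Σ j : Fin (n + 1), {y : C.Hom i (j : ℕ) →₀ k // y ∈ s (j : ℕ)} with hI
  let e : Fin (Fintype.card I) ≃ I := (Fintype.equivFin I).symm
  refine ⟨Fintype.card I, fun m => ((e m).1 : ℕ),
    fun m => ((e m).2 : C.Hom i ((e m).1 : ℕ) →₀ k), ?_, ?_⟩
  · intro m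
    rw [← hs ((e m).1 : ℕ)]
    show ((e m).2 : C.Hom i ((e m).1 : ℕ) →₀ k) ∈ Submodule.span k
      (s ((e m).1 : ℕ) : Set (C.Hom i ((e m).1 : ℕ) →₀ k))
    exact Submodule.subset_span (Finset.mem_coe.2 (e m).2.2)
  · intro W'' hW'' hgen j
    have hsub : ∀ (j : ℕ) (hjn : j < n + 1), ∀ y ∈ s j, y ∈ W'' j := by
      intro j hjn y hy
      have h2 := hgen (e.symm ⟨⟨j, hjn⟩, ⟨y, hy⟩⟩)
      have hkey : e (e.symm ⟨⟨j, hjn⟩, ⟨y, hy⟩⟩) = ⟨⟨j, hjn⟩, ⟨y, hy⟩⟩ :=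
        Equiv.apply_symm_apply e _
      simp only at h2
      have h3 : ∀ a : I, a = ⟨⟨j, hjn⟩, ⟨y, hy⟩⟩ →
          (show (Mfree k C i).V a.1 from (a.2 : C.Hom i a.1 →₀ k)) ∈ W'' a.1 → y ∈ W'' j := by
        rintro a rfl h; exact h
      exact h3 _ hkey h2
    induction j with
    | zero =>
      rw [← hs 0]
      exact Submodule.span_le.2 fun y hy => hsub 0 (by omega) y (Finset.mem_coe.1 hy)
    | succ j ih =>
      by_cases hjn : j + 1 < n + 1
      · rw [← hs (j + 1)]
        exact Submodule.span_le.2 fun y hy => hsub (j + 1) hjn y (Finset.mem_coe.1 hy)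
      · have hnj : n ≤ j := by omega
        refine le_trans (hn j hnj) (Submodule.span_le.2 ?_)
        rintro _ ⟨β, w, hw, rfl⟩
        have h2 := hW'' j (j + 1) β w (ih hw)
        exact h2
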